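/- For every M ≥ 1 and every n ≥ 1, the set C_n is a closed convex cone in the real vector space of Hermitian 2M×2M complex matrices, and C_{n+1} ⊆ C_n. -/

import Mathlib

open Matrix
open scoped ComplexOrder

noncomputable section

/-- The condition `|z|² P + z Q + z̄ Qᴴ + R ≥ 0` for all `z ∈ ℂ`. -/
def QuadPos (M : ℕ) (P Q R : Matrix (Fin M) (Fin M) ℂ) : Prop :=
  ∀ z : ℂ,
    ((z * (starRingEnd ℂ) z) • P + z • Q + ((starRingEnd ℂ) z) • Qᴴ + R).PosSemidef

/-- The `2M × 2M` block appearing at distance `k = j − i ≥ 0` from the diagonal in the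
matrix `𝒟(X₀, …, Xₙ; P, Q, R)`, where `X_{−i} := −Xᵢᴴ`:
`[[P, X₀], [−X₀, R]]` for `k = 0`; `[[0, Qᴴ/2 + X_{−1}], [Qᴴ/2 − X_{−1}, 0]]` for
`k = 1`; `[[0, X_{−k}], [−X_{−k}, 0]]` for `k ≥ 2`. -/
def DEntry (M : ℕ) (X : ℕ → Matrix (Fin M) (Fin M) ℂ)
    (P Q R : Matrix (Fin M) (Fin M) ℂ) (k : ℕ) :
    Matrix (Fin M ⊕ Fin M) (Fin M ⊕ Fin M) ℂ :=
  if k = 0 then fromBlocks P (X 0) (-(X 0)) R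
  else if k = 1 then
    fromBlocks 0 ((1 / 2 : ℂ) • Qᴴ + (-(X 1)ᴴ)) ((1 / 2 : ℂ) • Qᴴ - (-(X 1)ᴴ)) 0
  else fromBlocks 0 (-(X k)ᴴ) ((X k)ᴴ) 0

/-- The matrix `𝒟(X₀, …, Xₙ; P, Q, R)`: the `(n+1) × (n+1)` Hermitian block Toeplitz
matrix with `2M × 2M` blocks whose `(i, j)` block for `i ≤ j` is `DEntry ... (j − i)`,
and whose `(j, i)` block for `i < j` is the conjugate transpose of the `(i, j)` block. -/
def DMat (M n : ℕ) (X : ℕ → Matrix (Fin M) (Fin M) ℂ)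
    (P Q R : Matrix (Fin M) (Fin M) ℂ) :
    Matrix (Fin (n + 1) × (Fin M ⊕ Fin M)) (Fin (n + 1) × (Fin M ⊕ Fin M)) ℂ :=
  Matrix.of fun p q =>
    if p.1.val ≤ q.1.val then DEntry M X P Q R (q.1.val - p.1.val) p.2 q.2
    else (DEntry M X P Q R (p.1.val - q.1.val))ᴴ p.2 q.2

/-- The cone `C_n` of matrices `σ = [[P, Q], [Qᴴ, R]]` for which there exist
`X₀, …, Xₙ` with `X₀ᴴ = −X₀` such that `𝒟(X₀, …, Xₙ; P, Q, R) ≥ 0`. -/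
def CSet (M n : ℕ) : Set (Matrix (Fin M ⊕ Fin M) (Fin M ⊕ Fin M) ℂ) :=
  {σ | ∃ (P Q R : Matrix (Fin M) (Fin M) ℂ) (X : ℕ → Matrix (Fin M) (Fin M) ℂ),
    σ = fromBlocks P Q Qᴴ R ∧ (X 0)ᴴ = -(X 0) ∧ (DMat M n X P Q R).PosSemidef}



open Filter Topology



section Aux
open Filter Topology

instance matrixFirstCountable {α β : Type*} [Countable α] [Countable β] :
    FirstCountableTopology (Matrix α β ℂ) :=
  inferInstanceAs (FirstCountableTopology (α → β → ℂ))

lemma psd_smul {ι : Type*} [Fintype ι] {H : Matrix ι ι ℂ} (hH : H.PosSemidef)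
    {c : ℝ} (hc : 0 ≤ c) : ((c : ℂ) • H).PosSemidef := by
  refine .of_dotProduct_mulVec_nonneg ?_ ?_
  · rw [Matrix.IsHermitian, conjTranspose_smul, Complex.star_def, Complex.conj_ofReal, hH.1]
  · intro x
    rw [Matrix.smul_mulVec, dotProduct_smul, smul_eq_mul]
    exact mul_nonneg (by exact_mod_cast hc) (hH.dotProduct_mulVec_nonneg x)


lemma psd_diag_re_nonneg {ι : Type*} [Fintype ι] [DecidableEq ι] {H : Matrix ι ι ℂ}
    (hH : H.PosSemidef) (p : ι) : 0 ≤ (H p p).re := by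
  have h := hH.dotProduct_mulVec_nonneg (Pi.single p 1)
  have h2 : star (Pi.single p 1 : ι → ℂ) ⬝ᵥ (H *ᵥ Pi.single p 1) = H p p := by
    rw [Matrix.mulVec_single]
    have : star (Pi.single p 1 : ι → ℂ) = Pi.single p 1 := by
      ext i; by_cases hi : i = p <;> simp [Pi.single_apply, hi]
    rw [this, single_dotProduct]
    simp
  rw [h2] at h
  exact (Complex.le_def.mp h).1

lemma psd_entry_bound {ι : Type*} [Fintype ι] [DecidableEq ι] {H : Matrix ι ι ℂ}
    (hH : H.PosSemidef) (p q : ι) : ‖H p q‖ ≤ ((H p p).re + (H q q).re) / 2 := by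
  by_cases hz : H p q = 0
  · rw [hz, norm_zero]
    have := psd_diag_re_nonneg hH p
    have := psd_diag_re_nonneg hH q
    linarith
  by_cases hpq : p = q
  · subst hpq
    have him : (H p p).im = 0 := by
      have h := hH.dotProduct_mulVec_nonneg (Pi.single p 1)
      have h2 : star (Pi.single p 1 : ι → ℂ) ⬝ᵥ (H *ᵥ Pi.single p 1) = H p p := by
        rw [Matrix.mulVec_single]
        have : star (Pi.single p 1 : ι → ℂ) = Pi.single p 1 := by
          ext i; by_cases hi : i = p <;> simp [Pi.single_apply, hi]
        rw [this, single_dotProduct]; simp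
      rw [h2] at h
      exact ((Complex.le_def.mp h).2).symm
    have hre := psd_diag_re_nonneg hH p
    rw [Complex.norm_def, Complex.normSq_apply, him]
    simp only [mul_zero, add_zero]
    rw [Real.sqrt_mul_self hre]
    linarith
  · -- general off-diagonal case
    set z := H p q with hzdef
    set t : ℂ := -z / (‖z‖ : ℂ) with htdef
    set x : ι → ℂ := Pi.single p t + Pi.single q 1 with hxdef
    have hnz : (‖z‖ : ℂ) ≠ 0 := by
      simpa using norm_ne_zero_iff.mpr hz
    have hstar : star x = Pi.single p (star t) + Pi.single q 1 := by
      ext i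
      by_cases hip : i = p
      · subst hip; simp [hxdef, Pi.single_apply, hpq]
      · by_cases hiq : i = q <;> simp [hxdef, Pi.single_apply, hip, hiq, apply_ite (starRingEnd ℂ)]
    have hval : star x ⬝ᵥ (H *ᵥ x) =
        star t * (H p p * t + H p q) + (H q p * t + H q q) := by
      rw [hxdef, hstar, Matrix.mulVec_add, Matrix.mulVec_single, Matrix.mulVec_single]
      rw [add_dotProduct, single_dotProduct, single_dotProduct]
      simp only [Pi.add_apply, mul_one, Pi.smul_apply, op_smul_eq_mul, Matrix.col_apply]
      ring
    have hqp : H q p = star z := (hH.1.apply q p).symm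
    have hmc : star z * z = ((‖z‖ : ℂ))^2 := by
      rw [Complex.star_def, mul_comm, Complex.mul_conj,
        ← Complex.ofReal_pow, Complex.sq_norm]
    have hst : star t = -(star z) / (‖z‖ : ℂ) := by
      rw [htdef, star_div₀, star_neg, Complex.star_def, Complex.conj_ofReal]
    have key : star t * (H p p * t + H p q) + (H q p * t + H q q)
        = H p p + H q q - 2 * (‖z‖ : ℂ) := by
      rw [hqp, ← hzdef, hst, htdef]
      have e1 : -star z / (‖z‖:ℂ) * (H p p * (-z / (‖z‖:ℂ)) + z)
          = H p p * ((star z * z) / (‖z‖:ℂ)^2) - (star z * z) / (‖z‖:ℂ) := by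
        field_simp; ring
      have e2 : star z * (-z / (‖z‖:ℂ)) = -((star z * z) / (‖z‖:ℂ)) := by ring
      rw [e1, e2, hmc]
      have habs : ((‖z‖ : ℝ) : ℂ) ≠ 0 := hnz
      field_simp [habs]
      ring
    have h0 := hH.dotProduct_mulVec_nonneg x
    rw [hval, key] at h0
    have hre := (Complex.le_def.mp h0).1
    simp only [Complex.sub_re, Complex.add_re, Complex.mul_re, Complex.ofReal_re,
      Complex.zero_re, Complex.ofReal_im] at hre
    norm_num at hre
    linarith

lemma psd_of_tendsto {ι : Type*} [Fintype ι] {A : ℕ → Matrix ι ι ℂ} {B : Matrix ι ι ℂ}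
    (hA : ∀ m, (A m).PosSemidef)
    (h : ∀ p q, Tendsto (fun m => A m p q) atTop (𝓝 (B p q))) : B.PosSemidef := by
  refine .of_dotProduct_mulVec_nonneg ?_ ?_
  · ext p q
    rw [conjTranspose_apply]
    have h1 : Tendsto (fun m => star (A m q p)) atTop (𝓝 (star (B q p))) := (h q p).star
    have h2 : (fun m => star (A m q p)) = fun m => A m p q := by
      funext m; exact (hA m).1.apply p q
    rw [h2] at h1
    exact tendsto_nhds_unique h1 (h p q)
  · intro x
    have hf : Tendsto (fun m => star x ⬝ᵥ (A m *ᵥ x)) atTop (𝓝 (star x ⬝ᵥ (B *ᵥ x))) := by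
      simp only [dotProduct, mulVec]
      apply tendsto_finset_sum
      intro p _
      exact (tendsto_finset_sum _ fun q _ => ((h p q).mul_const (x q))).const_mul _
    rw [Complex.le_def]
    constructor
    · have hre : Tendsto (fun m => (star x ⬝ᵥ (A m *ᵥ x)).re) atTop
          (𝓝 ((star x ⬝ᵥ (B *ᵥ x)).re)) := (Complex.continuous_re.tendsto _).comp hf
      refine ge_of_tendsto hre (Eventually.of_forall fun m => ?_)
      exact (Complex.le_def.mp ((hA m).dotProduct_mulVec_nonneg x)).1
    · have him : Tendsto (fun m => (star x ⬝ᵥ (A m *ᵥ x)).im) atTop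
          (𝓝 ((star x ⬝ᵥ (B *ᵥ x)).im)) := (Complex.continuous_im.tendsto _).comp hf
      have : (fun m => (star x ⬝ᵥ (A m *ᵥ x)).im) = fun _ => (0 : ℝ) := by
        funext m; exact ((Complex.le_def.mp ((hA m).dotProduct_mulVec_nonneg x)).2).symm
      rw [this] at him
      exact (tendsto_nhds_unique him tendsto_const_nhds).symm
lemma DEntry_congr {M : ℕ} {X Y : ℕ → Matrix (Fin M) (Fin M) ℂ}
    {P Q R : Matrix (Fin M) (Fin M) ℂ} {k : ℕ} (h : ∀ j ≤ k, X j = Y j) :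
    DEntry M X P Q R k = DEntry M Y P Q R k := by
  unfold DEntry
  rcases k with _ | _ | k
  · simp [h 0 le_rfl]
  · simp [h 1 le_rfl]
  · simp [h (k+2) le_rfl]

lemma DMat_congr {M n : ℕ} {X Y : ℕ → Matrix (Fin M) (Fin M) ℂ}
    {P Q R : Matrix (Fin M) (Fin M) ℂ} (h : ∀ k ≤ n, X k = Y k) :
    DMat M n X P Q R = DMat M n Y P Q R := by
  ext p q
  unfold DMat
  have h1 : ∀ i j : Fin (n+1), DEntry M X P Q R (j.val - i.val) = DEntry M Y P Q R (j.val - i.val) :=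
    fun i j => DEntry_congr (fun l hl => h l (by omega))
  simp only [Matrix.of_apply]
  split
  · rw [h1 p.1 q.1]
  · rw [h1 q.1 p.1]

lemma DEntry_add {M : ℕ} (X Y : ℕ → Matrix (Fin M) (Fin M) ℂ)
    (P Q R P' Q' R' : Matrix (Fin M) (Fin M) ℂ) (k : ℕ) :
    DEntry M (fun j => X j + Y j) (P + P') (Q + Q') (R + R') k
      = DEntry M X P Q R k + DEntry M Y P' Q' R' k := by
  ext u v
  rcases k with _ | _ | k <;> rcases u with a | a <;> rcases v with b | b <;>
      simp [DEntry, Matrix.add_apply, conjTranspose_apply] <;> ring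

lemma DEntry_smul {M : ℕ} (X : ℕ → Matrix (Fin M) (Fin M) ℂ)
    (P Q R : Matrix (Fin M) (Fin M) ℂ) (c : ℝ) (k : ℕ) :
    DEntry M (fun j => (c : ℂ) • X j) ((c : ℂ) • P) ((c : ℂ) • Q) ((c : ℂ) • R) k
      = (c : ℂ) • DEntry M X P Q R k := by
  ext u v
  rcases k with _ | _ | k <;> rcases u with a | a <;> rcases v with b | b <;>
      simp [DEntry, Matrix.smul_apply, conjTranspose_apply, smul_eq_mul, _root_.map_mul,
        Complex.conj_ofReal] <;> ring

lemma DMat_add {M n : ℕ} (X Y : ℕ → Matrix (Fin M) (Fin M) ℂ)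
    (P Q R P' Q' R' : Matrix (Fin M) (Fin M) ℂ) :
    DMat M n (fun j => X j + Y j) (P + P') (Q + Q') (R + R')
      = DMat M n X P Q R + DMat M n Y P' Q' R' := by
  ext p q
  unfold DMat
  simp only [Matrix.of_apply, Matrix.add_apply]
  split <;> simp [DEntry_add, Matrix.add_apply, conjTranspose_apply, Matrix.add_apply]

lemma DMat_smul {M n : ℕ} (X : ℕ → Matrix (Fin M) (Fin M) ℂ)
    (P Q R : Matrix (Fin M) (Fin M) ℂ) (c : ℝ) :
    DMat M n (fun j => (c : ℂ) • X j) ((c : ℂ) • P) ((c : ℂ) • Q) ((c : ℂ) • R)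
      = (c : ℂ) • DMat M n X P Q R := by
  ext p q
  unfold DMat
  simp only [Matrix.of_apply, Matrix.smul_apply]
  split
  · rw [DEntry_smul]; simp [Matrix.smul_apply]
  · rw [DEntry_smul]
    simp [Matrix.smul_apply, conjTranspose_apply, smul_eq_mul, _root_.map_mul,
      Complex.conj_ofReal]

section tendsto
variable {M n : ℕ} {Xs : ℕ → ℕ → Matrix (Fin M) (Fin M) ℂ}
  {Ps Qs Rs : ℕ → Matrix (Fin M) (Fin M) ℂ}
  {X : ℕ → Matrix (Fin M) (Fin M) ℂ} {P Q R : Matrix (Fin M) (Fin M) ℂ}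

lemma tendsto_DEntry_entry
    (hP : ∀ a b, Tendsto (fun m => Ps m a b) atTop (𝓝 (P a b)))
    (hQ : ∀ a b, Tendsto (fun m => Qs m a b) atTop (𝓝 (Q a b)))
    (hR : ∀ a b, Tendsto (fun m => Rs m a b) atTop (𝓝 (R a b)))
    (hX : ∀ k ≤ n, ∀ a b, Tendsto (fun m => Xs m k a b) atTop (𝓝 (X k a b)))
    {k : ℕ} (hk : k ≤ n) (u v : Fin M ⊕ Fin M) :
    Tendsto (fun m => DEntry M (Xs m) (Ps m) (Qs m) (Rs m) k u v) atTop
      (𝓝 (DEntry M X P Q R k u v)) := by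
  rcases k with _ | _ | k <;> rcases u with a | a <;> rcases v with b | b <;>
      simp only [DEntry, reduceIte, Nat.succ_ne_zero, if_false, Nat.succ.injEq,
        fromBlocks_apply₁₁, fromBlocks_apply₁₂, fromBlocks_apply₂₁, fromBlocks_apply₂₂,
        Matrix.add_apply, Matrix.sub_apply, Matrix.neg_apply, Matrix.smul_apply,
        conjTranspose_apply, Matrix.zero_apply, smul_eq_mul]
  · exact hP a b
  · exact hX 0 (Nat.zero_le n) a b
  · exact (hX 0 (Nat.zero_le n) a b).neg
  · exact hR a b
  · exact tendsto_const_nhds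
  · exact (((hQ b a).star).const_mul _).add ((hX 1 hk b a).star).neg
  · exact (((hQ b a).star).const_mul _).sub ((hX 1 hk b a).star).neg
  · exact tendsto_const_nhds
  · exact tendsto_const_nhds
  · exact ((hX (k+2) hk b a).star).neg
  · exact (hX (k+2) hk b a).star
  · exact tendsto_const_nhds

lemma tendsto_DMat_entry
    (hP : ∀ a b, Tendsto (fun m => Ps m a b) atTop (𝓝 (P a b)))
    (hQ : ∀ a b, Tendsto (fun m => Qs m a b) atTop (𝓝 (Q a b)))
    (hR : ∀ a b, Tendsto (fun m => Rs m a b) atTop (𝓝 (R a b)))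
    (hX : ∀ k ≤ n, ∀ a b, Tendsto (fun m => Xs m k a b) atTop (𝓝 (X k a b)))
    (p q : Fin (n + 1) × (Fin M ⊕ Fin M)) :
    Tendsto (fun m => DMat M n (Xs m) (Ps m) (Qs m) (Rs m) p q) atTop
      (𝓝 (DMat M n X P Q R p q)) := by
  unfold DMat
  simp only [Matrix.of_apply]
  split
  · exact tendsto_DEntry_entry hP hQ hR hX (by omega) p.2 q.2
  · simp only [conjTranspose_apply]
    exact (tendsto_DEntry_entry hP hQ hR hX (by omega) q.2 p.2).star

-- easy conjuncts
lemma cset_herm {M n : ℕ} {σ : Matrix (Fin M ⊕ Fin M) (Fin M ⊕ Fin M) ℂ}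
    (hσ : σ ∈ CSet M n) : σ.IsHermitian := by
  obtain ⟨P, Q, R, X, rfl, hX0, hD⟩ := hσ
  have hP : Pᴴ = P := by
    ext a b
    have h := hD.1.apply ((0 : Fin (n+1)), Sum.inl a) ((0 : Fin (n+1)), Sum.inl b)
    simpa [DMat, DEntry, conjTranspose_apply] using h
  have hR : Rᴴ = R := by
    ext a b
    have h := hD.1.apply ((0 : Fin (n+1)), Sum.inr a) ((0 : Fin (n+1)), Sum.inr b)
    simpa [DMat, DEntry, conjTranspose_apply] using h
  rw [Matrix.IsHermitian, fromBlocks_conjTranspose, hP, hR, conjTranspose_conjTranspose]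

lemma cset_add {M n : ℕ} {σ₁ σ₂ : Matrix (Fin M ⊕ Fin M) (Fin M ⊕ Fin M) ℂ}
    (h₁ : σ₁ ∈ CSet M n) (h₂ : σ₂ ∈ CSet M n) : σ₁ + σ₂ ∈ CSet M n := by
  obtain ⟨P, Q, R, X, rfl, hX0, hD⟩ := h₁
  obtain ⟨P', Q', R', Y, rfl, hY0, hD'⟩ := h₂
  refine ⟨P + P', Q + Q', R + R', fun j => X j + Y j, ?_, ?_, ?_⟩
  · rw [fromBlocks_add, conjTranspose_add]
  · rw [conjTranspose_add, hX0, hY0, neg_add]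
  · rw [DMat_add]
    exact hD.add hD'

lemma cset_smul {M n : ℕ} {σ : Matrix (Fin M ⊕ Fin M) (Fin M ⊕ Fin M) ℂ}
    {c : ℝ} (hc : 0 ≤ c) (hσ : σ ∈ CSet M n) : (c : ℂ) • σ ∈ CSet M n := by
  obtain ⟨P, Q, R, X, rfl, hX0, hD⟩ := hσ
  have hcs : star (c : ℂ) = (c : ℂ) := by rw [Complex.star_def, Complex.conj_ofReal]
  refine ⟨(c : ℂ) • P, (c : ℂ) • Q, (c : ℂ) • R, fun j => (c : ℂ) • X j, ?_, ?_, ?_⟩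
  · rw [fromBlocks_smul, conjTranspose_smul, hcs]
  · rw [conjTranspose_smul, hcs, hX0, smul_neg]
  · rw [DMat_smul]
    exact psd_smul hD hc

lemma cset_antitone {M n : ℕ} {σ : Matrix (Fin M ⊕ Fin M) (Fin M ⊕ Fin M) ℂ}
    (hσ : σ ∈ CSet M (n + 1)) : σ ∈ CSet M n := by
  obtain ⟨P, Q, R, X, rfl, hX0, hD⟩ := hσ
  refine ⟨P, Q, R, X, rfl, hX0, ?_⟩
  have he : DMat M n X P Q R = (DMat M (n+1) X P Q R).submatrix
      (fun p => ((⟨p.1.val, by omega⟩ : Fin (n+2)), p.2))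
      (fun p => ((⟨p.1.val, by omega⟩ : Fin (n+2)), p.2)) := rfl
  rw [he]
  exact hD.submatrix _

lemma cset_closed (M n : ℕ) (hn : 1 ≤ n) : IsClosed (CSet M n) := by
  refine IsSeqClosed.isClosed ?_
  intro f σ hf hlim
  have hent : ∀ p q, Tendsto (fun m => f m p q) atTop (𝓝 (σ p q)) := by
    intro p q
    exact (tendsto_pi_nhds.mp ((tendsto_pi_nhds.mp hlim) p)) q
  choose Ps Qs Rs Xs hσeq hX0 hD using hf
  have hfP : ∀ m a b, Ps m a b = f m (Sum.inl a) (Sum.inl b) := by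
    intro m a b; rw [hσeq m]; rfl
  have hfQ : ∀ m a b, Qs m a b = f m (Sum.inl a) (Sum.inr b) := by
    intro m a b; rw [hσeq m]; rfl
  have hfR : ∀ m a b, Rs m a b = f m (Sum.inr a) (Sum.inr b) := by
    intro m a b; rw [hσeq m]; rfl
  obtain ⟨C, hC0, hCb⟩ : ∃ C : ℝ, 0 ≤ C ∧ ∀ m p q, ‖f m p q‖ ≤ C := by
    have h1 : ∀ pq : (Fin M ⊕ Fin M) × (Fin M ⊕ Fin M),
        ∃ c : ℝ, 0 ≤ c ∧ ∀ m, ‖f m pq.1 pq.2‖ ≤ c := by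
      intro pq
      obtain ⟨c, hc⟩ := ((hent pq.1 pq.2).norm).bddAbove_range
      exact ⟨max c 0, le_max_right _ _,
        fun m => le_trans (hc (Set.mem_range_self m)) (le_max_left _ _)⟩
    choose cs hcs0 hcsb using h1
    refine ⟨∑ pq : (Fin M ⊕ Fin M) × (Fin M ⊕ Fin M), cs pq,
      Finset.sum_nonneg fun pq _ => hcs0 pq, ?_⟩
    intro m p q
    exact le_trans (hcsb (p, q) m)
      (Finset.single_le_sum (f := cs) (fun i _ => hcs0 i) (Finset.mem_univ (p, q)))
  have hDb : ∀ m p q, ‖DMat M n (Xs m) (Ps m) (Qs m) (Rs m) p q‖ ≤ C := by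
    intro m p q
    have hdiag : ∀ r, ((DMat M n (Xs m) (Ps m) (Qs m) (Rs m)) r r).re ≤ C := by
      rintro ⟨i, a | a⟩
      · have e : DMat M n (Xs m) (Ps m) (Qs m) (Rs m) (i, Sum.inl a) (i, Sum.inl a)
            = Ps m a a := by simp [DMat, DEntry]
        rw [e, hfP]
        exact le_trans (Complex.re_le_norm _) (le_trans (le_of_eq rfl)
          (hCb m _ _))
      · have e : DMat M n (Xs m) (Ps m) (Qs m) (Rs m) (i, Sum.inr a) (i, Sum.inr a)
            = Rs m a a := by simp [DMat, DEntry]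
        rw [e, hfR]
        exact le_trans (Complex.re_le_norm _) (le_trans (le_of_eq rfl)
          (hCb m _ _))
    refine le_trans (psd_entry_bound (hD m) p q) ?_
    have := hdiag p
    have := hdiag q
    linarith
  have hQb : ∀ m a b, ‖Qs m a b‖ ≤ C := by
    intro m a b; rw [hfQ]; exact hCb m _ _
  have hXb : ∀ m, ∀ k, k ≤ n → ∀ a b, ‖Xs m k a b‖ ≤ 2 * C := by
    intro m k hk a b
    match k with
    | 0 =>
      have e : Xs m 0 a b = DMat M n (Xs m) (Ps m) (Qs m) (Rs m)
          ((0 : Fin (n+1)), Sum.inl a) ((0 : Fin (n+1)), Sum.inr b) := by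
        simp [DMat, DEntry]
      rw [e]
      exact le_trans (hDb m _ _) (by linarith)
    | 1 =>
      have e : (starRingEnd ℂ) (Xs m 1 a b) = (1/2 : ℂ) * (starRingEnd ℂ) (Qs m a b)
          - DMat M n (Xs m) (Ps m) (Qs m) (Rs m)
            ((0 : Fin (n+1)), Sum.inl b) ((⟨1, by omega⟩ : Fin (n+1)), Sum.inr a) := by
        simp [DMat, DEntry]
      have h1 : ‖Xs m 1 a b‖ = ‖(starRingEnd ℂ) (Xs m 1 a b)‖ := (RCLike.norm_conj _).symm
      rw [h1, e]
      refine le_trans (norm_sub_le _ _) ?_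
      rw [norm_mul, RCLike.norm_conj]
      have h2 : ‖(1/2 : ℂ)‖ = 1/2 := by norm_num
      rw [h2]
      have := hQb m a b
      have := hDb m ((0 : Fin (n+1)), Sum.inl b) ((⟨1, by omega⟩ : Fin (n+1)), Sum.inr a)
      linarith
    | (k + 2) =>
      have e : (starRingEnd ℂ) (Xs m (k+2) a b) = -(DMat M n (Xs m) (Ps m) (Qs m) (Rs m)
          ((0 : Fin (n+1)), Sum.inl b) ((⟨k+2, by omega⟩ : Fin (n+1)), Sum.inr a)) := by
        simp [DMat, DEntry]
      have h1 : ‖Xs m (k+2) a b‖ = ‖(starRingEnd ℂ) (Xs m (k+2) a b)‖ := (RCLike.norm_conj _).symm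
      rw [h1, e, norm_neg]
      exact le_trans (hDb m _ _) (by linarith)
  have hK : IsCompact (Set.univ.pi fun _ : Fin (n+1) × Fin M × Fin M =>
      Metric.closedBall (0 : ℂ) (2 * C)) :=
    isCompact_univ_pi fun _ => isCompact_closedBall _ _
  have hgK : ∀ m, (fun t : Fin (n+1) × Fin M × Fin M => Xs m t.1.val t.2.1 t.2.2) ∈
      Set.univ.pi fun _ : Fin (n+1) × Fin M × Fin M => Metric.closedBall (0 : ℂ) (2 * C) := by
    intro m
    rw [Set.mem_univ_pi]
    intro t
    rw [Metric.mem_closedBall, dist_zero_right]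
    exact hXb m t.1.val (by omega) t.2.1 t.2.2
  obtain ⟨L, -, φ, hφ, hgL⟩ := hK.tendsto_subseq hgK
  set X' : ℕ → Matrix (Fin M) (Fin M) ℂ :=
    fun k => Matrix.of fun a b => if h : k < n + 1 then L (⟨k, h⟩, a, b) else 0 with hX'
  have hXconv : ∀ k, k ≤ n → ∀ a b,
      Tendsto (fun m => Xs (φ m) k a b) atTop (𝓝 (X' k a b)) := by
    intro k hk a b
    have h1 := tendsto_pi_nhds.mp hgL ((⟨k, by omega⟩ : Fin (n+1)), a, b)
    have h2 : X' k a b = L ((⟨k, by omega⟩ : Fin (n+1)), a, b) := by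
      rw [hX']
      simp only [Matrix.of_apply]
      rw [dif_pos (by omega : k < n + 1)]
    rw [h2]
    exact h1
  set Pl : Matrix (Fin M) (Fin M) ℂ := Matrix.of fun a b => σ (Sum.inl a) (Sum.inl b) with hPl
  set Ql : Matrix (Fin M) (Fin M) ℂ := Matrix.of fun a b => σ (Sum.inl a) (Sum.inr b) with hQl
  set Rl : Matrix (Fin M) (Fin M) ℂ := Matrix.of fun a b => σ (Sum.inr a) (Sum.inr b) with hRl
  have hPc : ∀ a b, Tendsto (fun m => Ps (φ m) a b) atTop (𝓝 (Pl a b)) := by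
    intro a b
    have h := (hent (Sum.inl a) (Sum.inl b)).comp hφ.tendsto_atTop
    simp only [hfP, Function.comp_def] at h ⊢; exact h
  have hQc : ∀ a b, Tendsto (fun m => Qs (φ m) a b) atTop (𝓝 (Ql a b)) := by
    intro a b
    have h := (hent (Sum.inl a) (Sum.inr b)).comp hφ.tendsto_atTop
    simp only [hfQ, Function.comp_def] at h ⊢; exact h
  have hRc : ∀ a b, Tendsto (fun m => Rs (φ m) a b) atTop (𝓝 (Rl a b)) := by
    intro a b
    have h := (hent (Sum.inr a) (Sum.inr b)).comp hφ.tendsto_atTop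
    simp only [hfR, Function.comp_def] at h ⊢; exact h
  have hpsd : (DMat M n X' Pl Ql Rl).PosSemidef := by
    refine psd_of_tendsto (A := fun m => DMat M n (Xs (φ m)) (Ps (φ m)) (Qs (φ m)) (Rs (φ m)))
      (fun m => hD (φ m)) ?_
    intro p q
    exact tendsto_DMat_entry hPc hQc hRc (fun k hk a b => hXconv k hk a b) p q
  refine ⟨Pl, Ql, Rl, X', ?_, ?_, hpsd⟩
  · ext (a | a) (b | b)
    · rfl
    · rfl
    · have h1 := hent (Sum.inr a) (Sum.inl b)
      have h3 := (hent (Sum.inl b) (Sum.inr a)).star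
      have h4 : (fun m => star (f m (Sum.inl b) (Sum.inr a))) =
          fun m => f m (Sum.inr a) (Sum.inl b) := by
        funext m
        rw [hσeq m]
        simp [fromBlocks, conjTranspose_apply]
      rw [h4] at h3
      have h5 := tendsto_nhds_unique h1 h3
      simpa [fromBlocks, conjTranspose_apply, hQl] using h5
    · rfl
  · ext a b
    rw [conjTranspose_apply]
    have h1 := (hXconv 0 (Nat.zero_le n) b a).star
    have h2 : (fun m => star (Xs (φ m) 0 b a)) = fun m => -(Xs (φ m) 0 a b) := by
      funext m
      have h := congrFun (congrFun (hX0 (φ m)) a) b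
      simpa [conjTranspose_apply] using h
    rw [h2] at h1
    have h6 := tendsto_nhds_unique h1 ((hXconv 0 (Nat.zero_le n) a b).neg)
    simpa using h6


/-- For every `M ≥ 1` and `n ≥ 1`, `C_n` is a closed convex cone in the real vector
space of Hermitian `2M × 2M` complex matrices, and `C_{n+1} ⊆ C_n`. -/
theorem CSet_isClosed_convexCone_antitone (M n : ℕ) (hM : 1 ≤ M) (hn : 1 ≤ n) :
    IsClosed (CSet M n) ∧
    (∀ σ ∈ CSet M n, σ.IsHermitian) ∧
    (∀ σ₁ ∈ CSet M n, ∀ σ₂ ∈ CSet M n, σ₁ + σ₂ ∈ CSet M n) ∧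
    (∀ c : ℝ, 0 ≤ c → ∀ σ ∈ CSet M n, (c : ℂ) • σ ∈ CSet M n) ∧
    CSet M (n + 1) ⊆ CSet M n := by
  exact ⟨cset_closed M n hn, fun _ h => cset_herm h, fun _ h₁ _ h₂ => cset_add h₁ h₂,
    fun _ hc _ h => cset_smul hc h, fun _ h => cset_antitone h⟩
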